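/- Let L be a complete lattice equipped with the upper topology, and let ν be a continuous valuation on L. Set x₀ := sup (supp ν), the supremum of the support of ν. Then x₀ is the unique point of L such that Λ(x₀) = ∫ Λ dν for every lower semicontinuous Λ : L → ℝ≥0∞ satisfying Λ(x ⊔ y) = Λ(x) + Λ(y) for all x, y ∈ L and Λ(⊥) = 0. -/

import Mathlib

open Set Topology

noncomputable section

/-- The topology on `ℝ≥0` induced by the Scott topology on `ℝ≥0∞`:
its nonempty proper open sets are the intervals `(r, ∞)`. -/
def scottNNReal : TopologicalSpace NNReal :=
  TopologicalSpace.generateFrom {s : Set NNReal | ∃ r : NNReal, s = Set.Ioi r}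

/-- Lower semicontinuity of a map into `ℝ≥0∞`, i.e. continuity into `ℝ≥0∞`
with the Scott topology of its usual order. -/
def IsLSC {X : Type*} [TopologicalSpace X] (f : X → ENNReal) : Prop :=
  ∀ r : ENNReal, IsOpen {x : X | r < f x}

/-- A topological cone: addition and scalar multiplication are jointly continuous,
where `ℝ≥0` carries the (subspace) Scott topology. -/
def IsTopologicalCone (C : Type*) [TopologicalSpace C] [Add C] [SMul NNReal C] : Prop :=
  Continuous (fun p : C × C => p.1 + p.2) ∧
    Continuous[@instTopologicalSpaceProd NNReal C scottNNReal _, _]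
      (fun p : NNReal × C => p.1 • p.2)

/-- A linear lower semicontinuous map `C → ℝ≥0∞`; the elements of the dual cone `C*`. -/
def IsLinearLSC {C : Type*} [TopologicalSpace C] [Add C] [SMul NNReal C]
    (Λ : C → ENNReal) : Prop :=
  (∀ x y : C, Λ (x + y) = Λ x + Λ y) ∧
    (∀ (a : NNReal) (x : C), Λ (a • x) = (a : ENNReal) * Λ x) ∧ IsLSC Λ

/-- The specialization preorder: `x ≤ y` iff every open set containing `x` contains `y`. -/
def SpecLE {X : Type*} [TopologicalSpace X] (x y : X) : Prop :=
  ∀ U : Set X, IsOpen U → x ∈ U → y ∈ U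

/-- A set is saturated iff it is upward closed for the specialization preorder. -/
def IsSaturated {X : Type*} [TopologicalSpace X] (A : Set X) : Prop :=
  ∀ x ∈ A, ∀ y : X, SpecLE x y → y ∈ A

/-- Upward closure with respect to the specialization preorder. -/
def upClosure {X : Type*} [TopologicalSpace X] (A : Set X) : Set X :=
  {y : X | ∃ x ∈ A, SpecLE x y}

/-- Convexity of a subset of a cone. -/
def IsConeConvex {C : Type*} [Add C] [SMul NNReal C] (A : Set C) : Prop :=
  ∀ x ∈ A, ∀ y ∈ A, ∀ a : NNReal, a ≤ 1 → a • x + (1 - a) • y ∈ A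

/-- A cone with a topology is locally convex if every point has a neighborhood base
of convex open sets. -/
def IsLocallyConvexCone (C : Type*) [TopologicalSpace C] [Add C] [SMul NNReal C] : Prop :=
  ∀ x : C, ∀ U : Set C, IsOpen U → x ∈ U →
    ∃ V : Set C, IsOpen V ∧ IsConeConvex V ∧ x ∈ V ∧ V ⊆ U

/-- A cone with a topology is locally convex-compact if every point has a neighborhood base
of convex compact sets. -/
def IsLocallyConvexCompactCone (C : Type*) [TopologicalSpace C] [Add C] [SMul NNReal C] : Prop :=
  ∀ x : C, ∀ U : Set C, IsOpen U → x ∈ U →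
    ∃ K : Set C, IsCompact K ∧ IsConeConvex K ∧ x ∈ interior K ∧ K ⊆ U

/-- A continuous valuation on a topological space `X`. -/
structure ContinuousValuation (X : Type*) [TopologicalSpace X] where
  toFun : Set X → ENNReal
  empty' : toFun ∅ = 0
  modular' : ∀ U V : Set X, IsOpen U → IsOpen V →
    toFun (U ∪ V) + toFun (U ∩ V) = toFun U + toFun V
  mono' : ∀ U V : Set X, IsOpen U → IsOpen V → U ⊆ V → toFun U ≤ toFun V
  scott' : ∀ D : Set (Set X), (∀ U ∈ D, IsOpen U) → DirectedOn (· ⊆ ·) D →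
    toFun (⋃₀ D) = ⨆ U ∈ D, toFun U

/-- The integral `∫ h dν = ∫₀^∞ ν({x : h(x) > t}) dt` of a map `h : X → ℝ≥0∞`
against a continuous valuation `ν`. -/
def valIntegral {X : Type*} [TopologicalSpace X] (ν : ContinuousValuation X)
    (h : X → ENNReal) : ENNReal :=
  ∫⁻ t in Set.Ioi (0 : ℝ), ν.toFun {x : X | ENNReal.ofReal t < h x}

/-- A barycenter of a continuous valuation `ν` on a cone `C`: a point `x₀` with
`Λ(x₀) = ∫ Λ dν` for every `Λ ∈ C*`. -/
def IsBarycenter {C : Type*} [TopologicalSpace C] [Add C] [SMul NNReal C]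
    (ν : ContinuousValuation C) (x₀ : C) : Prop :=
  ∀ Λ : C → ENNReal, IsLinearLSC Λ → Λ x₀ = valIntegral ν Λ

/-- The weak topology on the set of continuous valuations, generated by the subbasic
open sets `[U > r] = {ν : ν(U) > r}` for `U` open and `r : ℝ≥0`. -/
def weakTopology (X : Type*) [TopologicalSpace X] :
    TopologicalSpace (ContinuousValuation X) :=
  TopologicalSpace.generateFrom
    {S : Set (ContinuousValuation X) | ∃ (U : Set X) (r : NNReal),
      IsOpen U ∧ S = {ν : ContinuousValuation X | (r : ENNReal) < ν.toFun U}}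

/-- The upper topology on a preorder: the coarsest topology in which every
principal ideal `↓x` is closed. -/
def upperTop (L : Type*) [Preorder L] : TopologicalSpace L :=
  TopologicalSpace.generateFrom {s : Set L | ∃ x : L, s = (Set.Iic x)ᶜ}

section Aux

variable {L : Type*} [CompleteLattice L]

lemma genOpen_isUpperSet {U : Set L}
    (hU : TopologicalSpace.GenerateOpen {s : Set L | ∃ x : L, s = (Set.Iic x)ᶜ} U) : IsUpperSet U := by
  induction hU with
  | basic s hs => obtain ⟨x, rfl⟩ := hs; exact (isLowerSet_Iic x).compl
  | univ => exact isUpperSet_univ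
  | inter s t _ _ ihs iht => exact ihs.inter iht
  | sUnion S _ ih => exact isUpperSet_sUnion ih

lemma genOpen_scott {A : Set L} (hbot : (⊥ : L) ∈ A)
    (hsup : ∀ x ∈ A, ∀ y ∈ A, x ⊔ y ∈ A) {U : Set L}
    (hU : TopologicalSpace.GenerateOpen {s : Set L | ∃ x : L, s = (Set.Iic x)ᶜ} U)
    (h : sSup A ∈ U) : ∃ a ∈ A, a ∈ U := by
  induction hU with
  | basic s hs =>
      obtain ⟨x, rfl⟩ := hs
      by_contra hc
      push_neg at hc
      exact h (sSup_le fun a ha => not_not.mp (hc a ha))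
  | univ => exact ⟨⊥, hbot, trivial⟩
  | inter s t hs ht ihs iht =>
      obtain ⟨a, ha, has⟩ := ihs h.1
      obtain ⟨b, hb, hbt⟩ := iht h.2
      exact ⟨a ⊔ b, hsup a ha b hb,
        (genOpen_isUpperSet hs) le_sup_left has, (genOpen_isUpperSet ht) le_sup_right hbt⟩
  | sUnion S hS ih =>
      obtain ⟨s, hsS, hmem⟩ := h
      obtain ⟨a, ha, has⟩ := ih s hsS hmem
      exact ⟨a, ha, s, hsS, has⟩

end Aux

lemma valIntegral_zero_top {X : Type*} [TopologicalSpace X] (ν : ContinuousValuation X)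
    {Λ : X → ENNReal} (hΛ : ∀ x, Λ x = 0 ∨ Λ x = ⊤) :
    valIntegral ν Λ = ν.toFun {x : X | 0 < Λ x} * ⊤ := by
  unfold valIntegral
  have hset : ∀ t ∈ Set.Ioi (0:ℝ),
      ν.toFun {x : X | ENNReal.ofReal t < Λ x} = ν.toFun {x : X | 0 < Λ x} := by
    intro t ht
    congr 1
    ext x
    rcases hΛ x with h0 | htop
    · simp [h0]
    · simp [htop, ENNReal.ofReal_lt_top]
  rw [MeasureTheory.setLIntegral_congr_fun measurableSet_Ioi hset,
    MeasureTheory.setLIntegral_const, Real.volume_Ioi]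


/-- For a continuous valuation `ν` on a complete lattice `L` with its upper
topology, `sSup (supp ν)` is the unique point `x₀` such that `Λ(x₀) = ∫ Λ dν` for every lower
semicontinuous `Λ : L → ℝ≥0∞` that is additive for binary joins and zero at `⊥`. -/
theorem barycenter_eq_sSup_supp {L : Type*} [CompleteLattice L]
    (ν : @ContinuousValuation L (upperTop L)) :
    ∀ x₀ : L,
      (∀ Λ : L → ENNReal,
        (∀ r : NNReal, IsOpen[upperTop L] {x : L | (r : ENNReal) < Λ x}) →
        (∀ x y : L, Λ (x ⊔ y) = Λ x + Λ y) → Λ ⊥ = 0 →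
        Λ x₀ = @valIntegral L (upperTop L) ν Λ) ↔
      x₀ = sSup ((⋃₀ {V : Set L | IsOpen[upperTop L] V ∧ @ContinuousValuation.toFun L (upperTop L) ν V = 0})ᶜ) := by
  classical
  letI : TopologicalSpace L := upperTop L
  set D : Set (Set L) := {V : Set L | IsOpen V ∧ ν.toFun V = 0} with hD
  set N : Set L := ⋃₀ D with hN
  have hNopen : IsOpen N := isOpen_sUnion fun V hV => hV.1
  have hNnull : ν.toFun N = 0 := by
    rw [hN, ν.scott' D (fun U hU => hU.1)]
    · refine le_antisymm (iSup₂_le fun U hU => hU.2 ▸ le_rfl) zero_le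
    · rintro U ⟨hUo, hU0⟩ V ⟨hVo, hV0⟩
      refine ⟨U ∪ V, ⟨hUo.union hVo, ?_⟩, subset_union_left, subset_union_right⟩
      have := ν.modular' U V hUo hVo
      rw [hU0, hV0, add_zero] at this
      exact (add_eq_zero.mp this).1
  -- Iic complements are open
  have hIic : ∀ y : L, IsOpen ((Set.Iic y)ᶜ) := fun y =>
    TopologicalSpace.GenerateOpen.basic _ ⟨y, rfl⟩
  set x' : L := sSup Nᶜ with hx'
  have hNc_le : ∀ a ∈ Nᶜ, a ≤ x' := fun a ha => le_sSup ha
  -- the key fact: x' satisfies the barycenter property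
  have hbary : ∀ Λ : L → ENNReal,
      (∀ r : NNReal, IsOpen {x : L | (r : ENNReal) < Λ x}) →
      (∀ x y : L, Λ (x ⊔ y) = Λ x + Λ y) → Λ ⊥ = 0 →
      Λ x' = valIntegral ν Λ := by
    intro Λ hLSC hAdd hb
    have hdich : ∀ x : L, Λ x = 0 ∨ Λ x = ⊤ := by
      intro x
      have h := hAdd x x
      rw [sup_idem] at h
      by_cases ht : Λ x = ⊤
      · exact Or.inr ht
      · refine Or.inl ?_
        have h2 : Λ x + 0 = Λ x + Λ x := by rw [add_zero]; exact h
        exact ((ENNReal.add_right_inj ht).mp h2).symm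
    set U : Set L := {x : L | 0 < Λ x} with hU
    have hUopen : IsOpen U := by
      have := hLSC 0
      simpa using this
    have hUupper : IsUpperSet U := genOpen_isUpperSet hUopen
    rw [valIntegral_zero_top ν hdich]
    by_cases hnull : ν.toFun U = 0
    · have hUN : U ⊆ N := subset_sUnion_of_mem ⟨hUopen, hnull⟩
      have hbotc : (⊥ : L) ∈ Uᶜ := by simp [hU, hb]
      have hsupc : ∀ x ∈ Uᶜ, ∀ y ∈ Uᶜ, x ⊔ y ∈ Uᶜ := by
        intro x hx y hy
        simp only [hU, mem_compl_iff, mem_setOf_eq, not_lt, nonpos_iff_eq_zero] at hx hy ⊢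
        rw [hAdd, hx, hy, add_zero]
      have hsc : sSup Uᶜ ∈ Uᶜ := by
        by_contra hmem
        obtain ⟨a, ha, haU⟩ := genOpen_scott hbotc hsupc hUopen (not_not.mp hmem)
        exact ha haU
      have hx'c : x' ∈ Uᶜ := by
        intro hx'U
        exact hsc (hUupper (sSup_le_sSup (compl_subset_compl.mpr hUN)) hx'U)
      have : Λ x' = 0 := by
        simpa [hU, not_lt, nonpos_iff_eq_zero] using hx'c
      rw [this, hnull, zero_mul]
    · obtain ⟨a, haU, haN⟩ : ∃ a, a ∈ U ∧ a ∉ N := by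
        by_contra hc
        push_neg at hc
        exact hnull (le_antisymm (hNnull ▸ ν.mono' U N hUopen hNopen hc) zero_le)
      have hx'U : x' ∈ U := hUupper (hNc_le a haN) haU
      have hΛx' : Λ x' = ⊤ := (hdich x').resolve_left (by
        intro h0; rw [hU] at hx'U; simp [h0] at hx'U)
      rw [hΛx', ENNReal.mul_top hnull]
  intro x₀
  constructor
  · intro h
    -- use the test functionals Λ_y
    have key : ∀ y : L, (x₀ ≤ y ↔ ν.toFun ((Set.Iic y)ᶜ) = 0) := by
      intro y
      set Λ : L → ENNReal := fun x => if x ≤ y then 0 else ⊤ with hΛ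
      have hdich : ∀ x : L, Λ x = 0 ∨ Λ x = ⊤ := by
        intro x; by_cases hxy : x ≤ y <;> simp [hΛ, hxy]
      have hsets : {x : L | 0 < Λ x} = (Set.Iic y)ᶜ := by
        ext x; by_cases hxy : x ≤ y <;> simp [hΛ, hxy]
      have hval : Λ x₀ = valIntegral ν Λ := by
        refine h Λ ?_ ?_ ?_
        · intro r
          have : {x : L | (r : ENNReal) < Λ x} = (Set.Iic y)ᶜ := by
            ext x; by_cases hxy : x ≤ y <;>
              simp [hΛ, hxy, ENNReal.coe_lt_top]
          rw [this]; exact hIic y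
        · intro x z
          by_cases hx : x ≤ y <;> by_cases hz : z ≤ y <;>
            simp [hΛ, hx, hz, sup_le_iff]
        · simp [hΛ]
      rw [valIntegral_zero_top ν hdich, hsets] at hval
      constructor
      · intro hle
        have : Λ x₀ = 0 := by simp [hΛ, hle]
        rw [this] at hval
        rcases mul_eq_zero.mp hval.symm with h0 | h0
        · exact h0
        · exact absurd h0 ENNReal.top_ne_zero
      · intro h0
        rw [h0, zero_mul] at hval
        by_contra hle
        simp [hΛ, hle] at hval
    have h1 : x₀ ≤ x' := by
      rw [key]
      have : (Set.Iic x')ᶜ ⊆ N := by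
        rw [compl_subset_comm]
        intro a ha
        exact hNc_le a ha
      exact le_antisymm (hNnull ▸ ν.mono' _ _ (hIic x') hNopen this) zero_le
    have h2 : x' ≤ x₀ := by
      have h0 : ν.toFun ((Set.Iic x₀)ᶜ) = 0 := (key x₀).mp le_rfl
      have hsub : (Set.Iic x₀)ᶜ ⊆ N := subset_sUnion_of_mem ⟨hIic x₀, h0⟩
      exact sSup_le fun a ha => not_not.mp fun hax => ha (hsub hax)
    exact le_antisymm h1 h2
  · rintro rfl
    exact hbary
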